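/- There exist infinitely many quartic rational Diophantine quadruples; that is, the collection of sets {a,b,c,d} of four pairwise distinct nonzero rational numbers such that each of ab+1, ac+1, ad+1, bc+1, bd+1, cd+1 is a fourth power of a rational number, is infinite. -/

import Mathlib

/-- A quartic rational Diophantine quadruple: a set of four pairwise distinct
nonzero rational numbers such that the product of any two of them increased by 1
is a fourth power in ℚ. -/
def IsQuarticDiophQuadruple (s : Finset ℚ) : Prop :=
  s.card = 4 ∧ (0 : ℚ) ∉ s ∧
    ∀ x ∈ s, ∀ y ∈ s, x ≠ y → ∃ q : ℚ, x * y + 1 = q ^ 4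

/-- Each rational point on the surface `m⁴ + x⁴ = h⁴ + 1` (with mild
nondegeneracy conditions) yields a quartic rational Diophantine quadruple
`{h², -1/h², (x⁴-1)/h², (m⁴-1)/h²}`. -/
lemma quad_of_point (m x h : ℚ) (hm : m ≠ 0) (hx : x ≠ 0) (hh : h ≠ 0)
    (hm1 : m ^ 4 ≠ 1) (hx1 : x ^ 4 ≠ 1) (hmx : m ^ 4 ≠ x ^ 4)
    (hE : m ^ 4 + x ^ 4 = h ^ 4 + 1) :
    IsQuarticDiophQuadruple
      {h ^ 2, -1 / h ^ 2, (x ^ 4 - 1) / h ^ 2, (m ^ 4 - 1) / h ^ 2} := by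
  have h2 : (h : ℚ) ^ 2 ≠ 0 := by positivity
  have h2pos : (0 : ℚ) < h ^ 2 := by positivity
  have hm4 : m ^ 4 ≠ 0 := by positivity
  have hx4 : x ^ 4 ≠ 0 := by positivity
  -- pairwise distinctness
  have hab : h ^ 2 ≠ -1 / h ^ 2 := by
    have : -1 / h ^ 2 < 0 := by
      apply div_neg_of_neg_of_pos <;> [norm_num; exact h2pos]
    exact ne_of_gt (lt_trans this h2pos)
  have hac : h ^ 2 ≠ (x ^ 4 - 1) / h ^ 2 := by
    intro e
    rw [eq_div_iff h2] at e
    exact hm4 (by linear_combination hE + e)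
  have had : h ^ 2 ≠ (m ^ 4 - 1) / h ^ 2 := by
    intro e
    rw [eq_div_iff h2] at e
    exact hx4 (by linear_combination hE + e)
  have hbc : -1 / h ^ 2 ≠ (x ^ 4 - 1) / h ^ 2 := by
    intro e
    rw [div_eq_div_iff h2 h2] at e
    have : x ^ 4 * h ^ 2 = 0 := by linear_combination -e
    exact hx4 ((mul_eq_zero.mp this).resolve_right h2)
  have hbd : -1 / h ^ 2 ≠ (m ^ 4 - 1) / h ^ 2 := by
    intro e
    rw [div_eq_div_iff h2 h2] at e
    have : m ^ 4 * h ^ 2 = 0 := by linear_combination -e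
    exact hm4 ((mul_eq_zero.mp this).resolve_right h2)
  have hcd : (x ^ 4 - 1) / h ^ 2 ≠ (m ^ 4 - 1) / h ^ 2 := by
    intro e
    rw [div_eq_div_iff h2 h2] at e
    apply hmx
    have : (x ^ 4 - m ^ 4) * h ^ 2 = 0 := by linear_combination e
    have := (mul_eq_zero.mp this).resolve_right h2
    linarith [sub_eq_zero.mp this]
  refine ⟨?_, ?_, ?_⟩
  · have h1 : h ^ 2 ∉ ({-1 / h ^ 2, (x ^ 4 - 1) / h ^ 2, (m ^ 4 - 1) / h ^ 2} : Finset ℚ) := by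
      simp [hab, hac, had]
    have hh2 : -1 / h ^ 2 ∉ ({(x ^ 4 - 1) / h ^ 2, (m ^ 4 - 1) / h ^ 2} : Finset ℚ) := by
      simp [hbc, hbd]
    have h3 : (x ^ 4 - 1) / h ^ 2 ∉ ({(m ^ 4 - 1) / h ^ 2} : Finset ℚ) := by
      simp [hcd]
    rw [Finset.card_insert_of_notMem h1, Finset.card_insert_of_notMem hh2,
      Finset.card_insert_of_notMem h3, Finset.card_singleton]
  · simp only [Finset.mem_insert, Finset.mem_singleton]
    push_neg
    refine ⟨by positivity, ?_, ?_, ?_⟩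
    · intro e
      rw [eq_comm, div_eq_zero_iff] at e
      rcases e with e | e
      · norm_num at e
      · exact h2 e
    · intro e
      rw [eq_comm, div_eq_zero_iff] at e
      rcases e with e | e
      · exact hx1 (by linarith [sub_eq_zero.mp e])
      · exact h2 e
    · intro e
      rw [eq_comm, div_eq_zero_iff] at e
      rcases e with e | e
      · exact hm1 (by linarith [sub_eq_zero.mp e])
      · exact h2 e
  · have em : m ^ 4 = h ^ 4 + 1 - x ^ 4 := by linarith
    have ex : x ^ 4 = h ^ 4 + 1 - m ^ 4 := by linarith
    intro a ha b hb hne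
    simp only [Finset.mem_insert, Finset.mem_singleton] at ha hb
    rcases ha with rfl | rfl | rfl | rfl <;> rcases hb with rfl | rfl | rfl | rfl
    · exact absurd rfl hne
    · exact ⟨0, by field_simp; norm_num⟩
    · exact ⟨x, by field_simp; try ring⟩
    · exact ⟨m, by field_simp; try ring⟩
    · exact ⟨0, by field_simp; norm_num⟩
    · exact absurd rfl hne
    · exact ⟨m / h, by rw [div_pow, em]; field_simp; ring⟩
    · exact ⟨x / h, by rw [div_pow, ex]; field_simp; ring⟩
    · exact ⟨x, by field_simp; try ring⟩
    · exact ⟨m / h, by rw [div_pow, em]; field_simp; ring⟩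
    · exact absurd rfl hne
    · exact ⟨m * x / h, by rw [div_pow, mul_pow, em]; field_simp; ring⟩
    · exact ⟨m, by field_simp; try ring⟩
    · exact ⟨x / h, by rw [div_pow, ex]; field_simp; ring⟩
    · exact ⟨m * x / h, by rw [div_pow, mul_pow, em]; field_simp; ring⟩
    · exact absurd rfl hne

/-- Euler's parametric solution of `A⁴ + B⁴ = C⁴ + D⁴` (specialized). -/
private def pA (n : ℚ) : ℚ := n ^ 7 + n ^ 5 - 2 * n ^ 3 + 3 * n ^ 2 + n
private def pB (n : ℚ) : ℚ := n ^ 6 - 3 * n ^ 5 - 2 * n ^ 4 + n ^ 2 + 1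
private def pC (n : ℚ) : ℚ := n ^ 7 + n ^ 5 - 2 * n ^ 3 - 3 * n ^ 2 + n
private def pD (n : ℚ) : ℚ := n ^ 6 + 3 * n ^ 5 - 2 * n ^ 4 + n ^ 2 + 1

private lemma euler_id (n : ℚ) :
    pA n ^ 4 + pB n ^ 4 = pC n ^ 4 + pD n ^ 4 := by
  unfold pA pB pC pD; ring

private lemma pApos {n : ℚ} (hn : 4 ≤ n) : 0 < pA n := by
  have h0 : (0:ℚ) < n := by linarith
  have h16 : (16:ℚ) ≤ n ^ 2 := by nlinarith
  have c1 : (0:ℚ) ≤ (n ^ 2 - 2) * n ^ 3 :=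
    mul_nonneg (by linarith) (pow_pos h0 3).le
  unfold pA
  nlinarith [pow_pos h0 7, pow_pos h0 2, c1, h0]

private lemma pBpos {n : ℚ} (hn : 4 ≤ n) : 0 < pB n := by
  have h0 : (0:ℚ) < n := by linarith
  have c1 : (0:ℚ) ≤ (n ^ 2 - 3 * n - 2) * n ^ 4 := by
    have : (0:ℚ) ≤ n ^ 2 - 3 * n - 2 := by nlinarith
    exact mul_nonneg this (pow_pos h0 4).le
  unfold pB
  nlinarith [pow_pos h0 2, c1]

private lemma pCpos {n : ℚ} (hn : 4 ≤ n) : 0 < pC n := by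
  have h0 : (0:ℚ) < n := by linarith
  have P5 : (1024:ℚ) ≤ n ^ 5 := by
    calc (1024:ℚ) = 4 ^ 5 := by norm_num
    _ ≤ n ^ 5 := by gcongr <;> norm_num
  have h16 : (16:ℚ) ≤ n ^ 2 := by nlinarith
  have c1 : (0:ℚ) ≤ (n ^ 2 - 2) * n ^ 3 :=
    mul_nonneg (by linarith) (pow_pos h0 3).le
  have c2 : (0:ℚ) ≤ (n ^ 5 - 3) * n ^ 2 := by
    exact mul_nonneg (by linarith) (pow_pos h0 2).le
  unfold pC
  nlinarith [c1, c2, h0]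

private lemma pDpos {n : ℚ} (hn : 4 ≤ n) : 0 < pD n := by
  have h0 : (0:ℚ) < n := by linarith
  have c1 : (0:ℚ) ≤ (3 * n - 2) * n ^ 4 := by
    exact mul_nonneg (by linarith) (pow_pos h0 4).le
  unfold pD
  nlinarith [pow_pos h0 6, pow_pos h0 2, c1]

private lemma pD_lt_pA {n : ℚ} (hn : 4 ≤ n) : pD n < pA n := by
  have h0 : (0:ℚ) < n := by linarith
  have c1 : (0:ℚ) ≤ (n ^ 2 - n - 2) * n ^ 5 := by
    have : (0:ℚ) ≤ n ^ 2 - n - 2 := by nlinarith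
    exact mul_nonneg this (pow_pos h0 5).le
  have c2 : (0:ℚ) ≤ (n - 1) * n ^ 3 := by
    exact mul_nonneg (by linarith) (pow_pos h0 3).le
  unfold pA pD
  nlinarith [c1, c2, pow_pos h0 4, pow_pos h0 2, h0]

private lemma pB_lt_pD {n : ℚ} (hn : 4 ≤ n) : pB n < pD n := by
  have h0 : (0:ℚ) < n := by linarith
  have key : pD n - pB n = 6 * n ^ 5 := by unfold pB pD; ring
  nlinarith [pow_pos h0 5]

private lemma pB_lt_pA {n : ℚ} (hn : 4 ≤ n) : pB n < pA n := by
  have h0 : (0:ℚ) < n := by linarith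
  have c1 : (0:ℚ) ≤ (n - 1) * n ^ 6 := by
    exact mul_nonneg (by linarith) (pow_pos h0 6).le
  have c2 : (0:ℚ) ≤ (2 * n ^ 2 - 1) * n ^ 3 := by
    have : (0:ℚ) ≤ 2 * n ^ 2 - 1 := by nlinarith
    exact mul_nonneg this (pow_pos h0 3).le
  unfold pA pB
  nlinarith [c1, c2, pow_pos h0 5, pow_pos h0 4, pow_pos h0 2, h0]

private lemma pC_lt_nD {n : ℚ} (hn : 4 ≤ n) : pC n < n * pD n := by
  have h0 : (0:ℚ) < n := by linarith
  have key : n * pD n - pC n = 3 * n ^ 2 * (n ^ 4 - n ^ 3 + n + 1) := by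
    unfold pC pD; ring
  have c3 : (0:ℚ) < n ^ 4 - n ^ 3 + n + 1 := by
    have : (0:ℚ) ≤ (n - 1) * n ^ 3 := mul_nonneg (by linarith) (pow_pos h0 3).le
    nlinarith
  have pos : (0:ℚ) < 3 * n ^ 2 * (n ^ 4 - n ^ 3 + n + 1) :=
    mul_pos (by positivity) c3
  linarith

private lemma nD_lt_pC {n : ℚ} (hn : 4 ≤ n) : (n - 3) * pD n < pC n := by
  have h0 : (0:ℚ) < n := by linarith
  have key : pC n - (n - 3) * pD n = 3 * (4 * n ^ 5 - 2 * n ^ 4 - n ^ 3 + 1) := by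
    unfold pC pD; ring
  have c4 : (0:ℚ) < 4 * n ^ 5 - 2 * n ^ 4 - n ^ 3 + 1 := by
    have : (0:ℚ) ≤ (4 * n ^ 2 - 2 * n - 1) * n ^ 3 := by
      have : (0:ℚ) ≤ 4 * n ^ 2 - 2 * n - 1 := by nlinarith
      exact mul_nonneg this (pow_pos h0 3).le
    nlinarith
  linarith

/-- The parameter values. -/
private def ν (k : ℕ) : ℚ := 4 * (k : ℚ) + 4

private lemma ν4 (k : ℕ) : (4 : ℚ) ≤ ν k := by
  have : (0:ℚ) ≤ (k:ℚ) := Nat.cast_nonneg k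
  unfold ν; linarith

/-- The `h`-value of the k-th quadruple. -/
private def hq (k : ℕ) : ℚ := pC (ν k) / pD (ν k)

/-- The k-th quadruple. -/
private def Fq (k : ℕ) : Finset ℚ :=
  {hq k ^ 2, -1 / hq k ^ 2,
   ((pB (ν k) / pD (ν k)) ^ 4 - 1) / hq k ^ 2,
   ((pA (ν k) / pD (ν k)) ^ 4 - 1) / hq k ^ 2}

private lemma Fq_mem (k : ℕ) : IsQuarticDiophQuadruple (Fq k) := by
  have hn := ν4 k
  have hA := pApos hn
  have hB := pBpos hn
  have hC := pCpos hn
  have hD := pDpos hn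
  have hDA := pD_lt_pA hn
  have hBD := pB_lt_pD hn
  have hBA := pB_lt_pA hn
  have hD4 : pD (ν k) ^ 4 ≠ 0 := by positivity
  refine quad_of_point (pA (ν k) / pD (ν k)) (pB (ν k) / pD (ν k)) (hq k)
    ?_ ?_ ?_ ?_ ?_ ?_ ?_
  · exact div_ne_zero hA.ne' hD.ne'
  · exact div_ne_zero hB.ne' hD.ne'
  · exact div_ne_zero hC.ne' hD.ne'
  · intro e
    rw [div_pow, div_eq_one_iff_eq hD4] at e
    have : pD (ν k) ^ 4 < pA (ν k) ^ 4 :=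
      pow_lt_pow_left₀ hDA hD.le (by norm_num)
    linarith
  · intro e
    rw [div_pow, div_eq_one_iff_eq hD4] at e
    have : pB (ν k) ^ 4 < pD (ν k) ^ 4 :=
      pow_lt_pow_left₀ hBD hB.le (by norm_num)
    linarith
  · intro e
    rw [div_pow, div_pow, div_eq_div_iff hD4 hD4] at e
    have e2 := mul_right_cancel₀ hD4 e
    have : pB (ν k) ^ 4 < pA (ν k) ^ 4 :=
      pow_lt_pow_left₀ hBA hB.le (by norm_num)
    linarith
  · have hD0 : pD (ν k) ≠ 0 := hD.ne'
    unfold hq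
    field_simp
    linear_combination euler_id (ν k)

private lemma hq_pos (k : ℕ) : 0 < hq k :=
  div_pos (pCpos (ν4 k)) (pDpos (ν4 k))

private lemma hq_lt (k : ℕ) : hq k < ν k := by
  unfold hq
  rw [div_lt_iff₀ (pDpos (ν4 k))]
  exact pC_lt_nD (ν4 k)

private lemma hq_gt (k : ℕ) : ν k - 3 < hq k := by
  unfold hq
  rw [lt_div_iff₀ (pDpos (ν4 k))]
  exact nD_lt_pC (ν4 k)

theorem infinitely_many_quartic_diophantine_quadruples :
    {s : Finset ℚ | IsQuarticDiophQuadruple s}.Infinite := by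
  have hmono : StrictMono (fun k => hq k ^ 2) := by
    apply strictMono_nat_of_lt_succ
    intro k
    have a1 := hq_lt k
    have a2 := hq_gt (k + 1)
    have a3 : ν k ≤ ν (k + 1) - 3 := by
      unfold ν
      push_cast
      linarith
    have h1 : hq k < hq (k + 1) := (a1.trans_le a3).trans a2
    exact pow_lt_pow_left₀ h1 (hq_pos k).le (by norm_num)
  intro hfin
  have hU : (⋃ s ∈ {s : Finset ℚ | IsQuarticDiophQuadruple s}, (s : Set ℚ)).Finite :=
    hfin.biUnion (fun s _ => s.finite_toSet)
  have hsub : Set.range (fun k => hq k ^ 2) ⊆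
      ⋃ s ∈ {s : Finset ℚ | IsQuarticDiophQuadruple s}, (s : Set ℚ) := by
    rintro _ ⟨k, rfl⟩
    refine Set.mem_biUnion (Fq_mem k) ?_
    have : hq k ^ 2 ∈ Fq k := Finset.mem_insert_self _ _
    exact Finset.mem_coe.mpr this
  exact Set.infinite_range_of_injective hmono.injective (hU.subset hsub)
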